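/- Let X and Y be compact Hausdorff spaces and let φ : Y → X be a continuous map, inducing the unital *-homomorphism φ* : C(X) → C(Y), f ↦ f ∘ φ. Then φ* has real rank zero if and only if φ* factors through a commutative unital C*-algebra of real rank zero: that is, if and only if there exist a commutative unital C*-algebra D with real rank zero and unital *-homomorphisms α : C(X) → D and β : D → C(Y) such that φ* = β ∘ α. -/

import Mathlib

open Filter Topology
open scoped ComplexOrder

section Defs

variable {B : Type*} [NonUnitalNormedRing B] [StarRing B] [PartialOrder B]

/-- A projection in a C*-algebra: a self-adjoint idempotent. -/
def IsProjection (p : B) : Prop := star p = p ∧ p * p = p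

/-- The hereditary subalgebra `cl(a·S·a)`: the norm closure of `{a * b * a : b ∈ S}`. -/
def herSub (S : Set B) (a : B) : Set B := closure {x : B | ∃ b ∈ S, x = a * b * a}

/-- `T` has an approximate unit of projections. -/
def HasApproxUnitOfProjections (T : Set B) : Prop :=
  ∀ x ∈ T, 0 ≤ x → ∀ ε : ℝ, 0 < ε → ∃ p ∈ T, IsProjection p ∧ ‖p * x - x‖ < ε

/-- The inclusion `A ⊆ S` of C*-algebras has real rank zero. -/
def InclusionRealRankZero (A S : Set B) : Prop :=
  ∀ a ∈ A, 0 ≤ a → a ≠ 0 → HasApproxUnitOfProjections (herSub S a)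

end Defs

/-- A unital C*-algebra `D` (here, commutative) has real rank zero: every self-adjoint
element of `D` is a norm limit of self-adjoint elements of `D` with finite spectrum. -/
def UnitalRealRankZero (D : Type) (instD : CommCStarAlgebra D) : Prop :=
  letI := instD
  ∀ a : D, IsSelfAdjoint a → ∀ ε : ℝ, 0 < ε →
    ∃ b : D, IsSelfAdjoint b ∧ (spectrum ℂ b).Finite ∧ ‖a - b‖ ≤ ε

/-- `φ* : C(X) → C(Y)` factors through `D` via unital *-homomorphisms. -/
def FactorsThroughAlg {X Y : Type} [TopologicalSpace X] [CompactSpace X] [T2Space X]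
    [TopologicalSpace Y] [CompactSpace Y] [T2Space Y] (φ : C(Y, X))
    (D : Type) (instD : CommCStarAlgebra D) : Prop :=
  letI := instD
  ∃ (α : C(X, ℂ) →⋆ₐ[ℂ] D) (β : D →⋆ₐ[ℂ] C(Y, ℂ)), ∀ f : C(X, ℂ), β (α f) = f.comp φ


set_option linter.unusedSectionVars false
set_option linter.unusedVariables false
set_option maxHeartbeats 1000000

section Aux
variable {Y : Type} [TopologicalSpace Y] [CompactSpace Y] [T2Space Y]

lemma pos_apply {a : C(Y, ℂ)} (ha : (0:C(Y,ℂ)) ≤ a) (y : Y) :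
    a y = ((a y).re : ℂ) ∧ 0 ≤ (a y).re := by
  have h := (ContinuousMap.le_def.mp ha) y
  rw [ContinuousMap.zero_apply, Complex.le_def] at h
  refine ⟨Complex.ext (by simp) (by simpa using h.2.symm), by simpa using h.1⟩


lemma mul_self_eq_self_apply {p : C(Y, ℂ)} (hp : p * p = p) (y : Y) :
    p y = 0 ∨ p y = 1 := by
  have := congrArg (fun f : C(Y,ℂ) => f y) hp
  simp only [ContinuousMap.mul_apply] at this
  have h0 : p y * (p y - 1) = 0 := by rw [mul_sub, this, mul_one, sub_self]
  rcases mul_eq_zero.mp h0 with h | h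
  · exact Or.inl h
  · exact Or.inr (by linear_combination h)


lemma vanish_of_mem_herSub {a x : C(Y, ℂ)} (hx : x ∈ herSub Set.univ a) {y : Y}
    (hy : a y = 0) : x y = 0 := by
  have h : ∀ ε > 0, ‖x y‖ < ε := by
    intro ε hε
    obtain ⟨w, hw, hdist⟩ := Metric.mem_closure_iff.mp hx ε hε
    obtain ⟨b, -, rfl⟩ := hw
    have h1 : ‖x y - (a * b * a) y‖ ≤ ‖x - a * b * a‖ := by
      simpa using ContinuousMap.norm_coe_le_norm (x - a * b * a) y
    have h2 : (a * b * a) y = 0 := by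
      simp [ContinuousMap.mul_apply, hy]
    rw [h2, sub_zero] at h1
    calc ‖x y‖ ≤ ‖x - a * b * a‖ := h1
    _ = dist x (a * b * a) := (dist_eq_norm _ _).symm
    _ < ε := hdist
  by_contra hne
  exact absurd (h ‖x y‖ (norm_pos_iff.mpr hne)) (lt_irrefl _)


lemma exists_delta {a x : C(Y, ℂ)} (ha : (0:C(Y,ℂ)) ≤ a) (hx : ∀ y, a y = 0 → x y = 0)
    {ε : ℝ} (hε : 0 < ε) : ∃ δ > 0, ∀ y, (a y).re < δ → ‖x y‖ < ε := by
  set K : Set Y := {y | ε ≤ ‖x y‖} with hK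
  have hKc : IsClosed K := isClosed_le continuous_const (by fun_prop)
  rcases K.eq_empty_or_nonempty with hKe | hKne
  · exact ⟨1, one_pos, fun y _ => not_le.mp (fun h => Set.eq_empty_iff_forall_notMem.mp hKe y h)⟩
  · obtain ⟨y₀, hy₀K, hmin⟩ := hKc.isCompact.exists_isMinOn hKne
      ((Complex.continuous_re.comp a.continuous).continuousOn)
    refine ⟨(a y₀).re, ?_, fun y hy => ?_⟩
    · rcases lt_or_eq_of_le (pos_apply ha y₀).2 with h | h
      · exact h
      · exfalso
        have : a y₀ = 0 := by rw [(pos_apply ha y₀).1, ← h, Complex.ofReal_zero]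
        have := hx y₀ this
        have : ‖x y₀‖ = 0 := by rw [this, norm_zero]
        rw [hK] at hy₀K
        simp only [Set.mem_setOf_eq, this] at hy₀K
        linarith
    · by_contra hcon
      exact absurd (hmin (by simpa [hK] using not_lt.mp hcon)) (not_le.mpr hy)


lemma mem_herSub_of_vanish {a x : C(Y, ℂ)} (ha : (0:C(Y,ℂ)) ≤ a)
    (hx : ∀ y, a y = 0 → x y = 0) : x ∈ herSub Set.univ a := by
  rw [herSub, Metric.mem_closure_iff]
  intro ε hε
  obtain ⟨δ, hδ, hδx⟩ := exists_delta ha hx (half_pos hε)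
  set c : ℝ := min (ε * δ ^ 2 / (2 * (‖x‖ + 1))) 1 with hc
  have hxn : (0:ℝ) < ‖x‖ + 1 := by positivity
  have hcpos : 0 < c := by
    apply lt_min _ one_pos
    positivity
  have hcont : Continuous fun y => (((((a y).re) ^ 2 + c)⁻¹ : ℝ) : ℂ) := by
    apply Complex.continuous_ofReal.comp
    apply Continuous.inv₀
    · fun_prop
    · intro y
      have : 0 < ((a y).re) ^ 2 + c := by positivity
      exact ne_of_gt this
  set g : C(Y, ℂ) := ⟨fun y => (((((a y).re) ^ 2 + c)⁻¹ : ℝ) : ℂ), hcont⟩ with hg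
  refine ⟨a * (x * g) * a, ⟨x * g, Set.mem_univ _, rfl⟩, ?_⟩
  rw [dist_eq_norm]
  have key : ∀ y, ‖(x - a * (x * g) * a) y‖ ≤ ε / 2 := by
    intro y
    obtain ⟨hay, hre⟩ := pos_apply ha y
    set m := (a y).re with hm
    have hval : (x - a * (x * g) * a) y = x y * (c / (m ^ 2 + c) : ℝ) := by
      simp only [ContinuousMap.sub_apply, ContinuousMap.mul_apply, hg,
        ContinuousMap.coe_mk]
      rw [hay]
      push_cast
      simp only [Complex.ofReal_re]
      have hne0 : m ^ 2 + c ≠ 0 := ne_of_gt (by positivity)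
      have hne : (m:ℂ) ^ 2 + (c:ℂ) ≠ 0 := by
        rw [← Complex.ofReal_pow, ← Complex.ofReal_add]
        exact_mod_cast hne0
      field_simp
      ring
    rw [hval]
    rw [norm_mul]
    have hfrac : ‖((c / (m ^ 2 + c) : ℝ) : ℂ)‖ = c / (m ^ 2 + c) := by
      rw [Complex.norm_real, Real.norm_of_nonneg (by positivity)]
    rw [hfrac]
    have hfle1 : c / (m ^ 2 + c) ≤ 1 := by
      rw [div_le_one (by positivity)]; nlinarith [sq_nonneg m]
    rcases lt_or_ge m δ with hmδ | hmδ
    · calc ‖x y‖ * (c / (m ^ 2 + c)) ≤ ‖x y‖ * 1 := by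
            apply mul_le_mul_of_nonneg_left hfle1 (norm_nonneg _)
      _ = ‖x y‖ := mul_one _
      _ ≤ ε / 2 := le_of_lt (hδx y hmδ)
    · have h1 : c / (m ^ 2 + c) ≤ c / δ ^ 2 := by
        apply div_le_div_of_nonneg_left (le_of_lt hcpos) (by positivity)
        nlinarith
      have h2 : c ≤ ε * δ ^ 2 / (2 * (‖x‖ + 1)) := min_le_left _ _
      have h3 : ‖x y‖ ≤ ‖x‖ := ContinuousMap.norm_coe_le_norm x y
      have h4 : c / δ ^ 2 ≤ ε / (2 * (‖x‖ + 1)) := by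
        rw [div_le_div_iff₀ (by positivity) (by positivity)]
        calc c * (2 * (‖x‖ + 1)) ≤ (ε * δ ^ 2 / (2 * (‖x‖ + 1))) * (2 * (‖x‖ + 1)) := by
              apply mul_le_mul_of_nonneg_right h2 (by positivity)
        _ = ε * δ ^ 2 := by field_simp
      calc ‖x y‖ * (c / (m ^ 2 + c)) ≤ ‖x‖ * (ε / (2 * (‖x‖ + 1))) := by
            apply mul_le_mul h3 (h1.trans h4) (by positivity) (norm_nonneg _)
      _ ≤ (‖x‖ + 1) * (ε / (2 * (‖x‖ + 1))) := by
            apply mul_le_mul_of_nonneg_right (by linarith) (by positivity)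
      _ = ε / 2 := by field_simp
  calc ‖x - a * (x * g) * a‖ ≤ ε / 2 := by
        apply (ContinuousMap.norm_le _ (by positivity)).mpr key
  _ < ε := by linarith

lemma sa_apply {w : C(Y, ℂ)} (hw : IsSelfAdjoint w) (y : Y) : (w y).im = 0 := by
  have := congrArg (fun f : C(Y,ℂ) => f y) hw.star_eq
  simp only [ContinuousMap.star_apply] at this
  have h2 := congrArg Complex.im this
  rw [Complex.star_def, Complex.conj_im] at h2
  linarith

end Aux

lemma finite_continuousOn {f : ℝ → ℝ} {s : Set ℝ} (hs : s.Finite) : ContinuousOn f s := by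
  intro x hx
  rw [← continuousWithinAt_diff_self]
  apply continuousWithinAt_of_notMem_closure
  rw [hs.sdiff.isClosed.closure_eq]
  simp


theorem backward {X Y : Type} [TopologicalSpace X] [CompactSpace X] [T2Space X]
    [TopologicalSpace Y] [CompactSpace Y] [T2Space Y] (φ : C(Y, X))
    (D : Type) (instD : CommCStarAlgebra D) (hRR : UnitalRealRankZero D instD)
    (hfac : FactorsThroughAlg φ D instD) :
    InclusionRealRankZero (Set.range fun f : C(X, ℂ) => f.comp φ)
        (Set.univ : Set C(Y, ℂ)) := by
  letI := instD
  obtain ⟨α, β, hfact⟩ := hfac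
  rintro a ⟨f, rfl⟩ hapos hane
  simp only at hapos hane ⊢
  set a : C(Y, ℂ) := f.comp φ with ha
  intro x hx _hxpos ε hε
  have hxv : ∀ y, a y = 0 → x y = 0 := fun y hy => vanish_of_mem_herSub hx hy
  obtain ⟨δ, hδ, hδx⟩ := exists_delta hapos hxv (half_pos hε)
  -- positive preimage in C(X)
  have hcont : Continuous fun z : X => ((Real.sqrt (max (f z).re 0) : ℝ) : ℂ) := by
    apply Complex.continuous_ofReal.comp
    exact Real.continuous_sqrt.comp ((Complex.continuous_re.comp f.continuous).max
      continuous_const)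
  set h : C(X, ℂ) := ⟨fun z => ((Real.sqrt (max (f z).re 0) : ℝ) : ℂ), hcont⟩ with hh
  have hh_star : star h = h := by
    ext z
    simp only [ContinuousMap.star_apply, hh, ContinuousMap.coe_mk]
    exact Complex.conj_ofReal _
  have hhh : (h * h).comp φ = a := by
    ext y
    obtain ⟨hay, hre⟩ := pos_apply hapos y
    have hfy : (f (φ y)).re = (a y).re := rfl
    simp only [ContinuousMap.comp_apply, ContinuousMap.mul_apply, hh, ContinuousMap.coe_mk]
    rw [hfy, max_eq_left hre, ← Complex.ofReal_mul,
      Real.mul_self_sqrt hre, ← hay]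
  set d : D := α (h * h) with hd
  have hd_sa : IsSelfAdjoint d := by
    rw [IsSelfAdjoint, ← map_star, star_mul, hh_star, mul_comm]
  have hβd : β d = a := by rw [hd, hfact, hhh]
  set e : D := δ⁻¹ • d with he
  have he_sa : IsSelfAdjoint e := by
    rw [he, IsSelfAdjoint, star_smul, star_trivial, hd_sa.star_eq]
  obtain ⟨b, hb_sa, hb_fin, hb_close⟩ := hRR e he_sa 4⁻¹ (by norm_num)
  -- real spectrum finite
  have hfinR : (spectrum ℝ b).Finite := by
    have hpre : (algebraMap ℝ ℂ) ⁻¹' (spectrum ℂ b) = spectrum ℝ b :=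
      spectrum.preimage_algebraMap ℂ
    rw [← hpre]
    exact hb_fin.preimage ((algebraMap ℝ ℂ).injective.injOn)
  have hcOn : ∀ g : ℝ → ℝ, ContinuousOn g (spectrum ℝ b) := fun g => finite_continuousOn hfinR
  set k : ℝ → ℝ := fun t => if 2⁻¹ < t then 1 else 0 with hk
  set q : D := cfc k b with hq
  have hq_sa : IsSelfAdjoint q := cfc_predicate k b
  have hq_idem : q * q = q := by
    rw [hq, ← cfc_mul k k b (hcOn k) (hcOn k)]
    exact cfc_congr fun t _ => by by_cases h : 2⁻¹ < t <;> simp [hk, h]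
  -- u * u = b * q - 2⁻¹ • q
  have hkey1 : ∃ u : D, IsSelfAdjoint u ∧ u * u = b * q - (2⁻¹ : ℝ) • q := by
    refine ⟨cfc (fun t => Real.sqrt ((t - 2⁻¹) * k t)) b, cfc_predicate _ b, ?_⟩
    rw [← cfc_mul _ _ b (hcOn _) (hcOn _)]
    have h1 : cfc (fun t => Real.sqrt ((t - 2⁻¹) * k t) * Real.sqrt ((t - 2⁻¹) * k t)) b
        = cfc (fun t => t * k t - (2⁻¹:ℝ) • k t) b := by
      apply cfc_congr
      intro t _
      dsimp only
      have hnn : 0 ≤ (t - 2⁻¹) * k t := by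
        by_cases h : 2⁻¹ < t <;> simp [hk, h] <;> linarith
      rw [Real.mul_self_sqrt hnn, smul_eq_mul]
      by_cases h : 2⁻¹ < t <;> simp [hk, h] <;> ring
    rw [h1, cfc_sub (fun t => t * k t) (fun t => (2⁻¹:ℝ) • k t) b (hcOn _) (hcOn _),
      cfc_smul (2⁻¹:ℝ) k b (hcOn _),
      cfc_mul (fun t : ℝ => t) k b (hcOn _) (hcOn _), cfc_id' ℝ b]
  have hkey2 : ∃ v : D, IsSelfAdjoint v ∧
      v * v = ((2⁻¹ : ℝ) • 1 - b) * (1 - q) := by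
    refine ⟨cfc (fun t => Real.sqrt ((2⁻¹ - t) * (1 - k t))) b, cfc_predicate _ b, ?_⟩
    rw [← cfc_mul _ _ b (hcOn _) (hcOn _)]
    have h1 : cfc (fun t => Real.sqrt ((2⁻¹ - t) * (1 - k t)) *
        Real.sqrt ((2⁻¹ - t) * (1 - k t))) b
        = cfc (fun t => ((2⁻¹:ℝ) • (1:ℝ)  - t) * ((1:ℝ) - k t)) b := by
      apply cfc_congr
      intro t _
      dsimp only
      have hnn : 0 ≤ (2⁻¹ - t) * (1 - k t) := by
        by_cases h : 2⁻¹ < t <;> simp [hk, h] <;> linarith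
      rw [Real.mul_self_sqrt hnn]
      norm_num
    rw [h1, cfc_mul (fun t : ℝ => (2⁻¹:ℝ) • (1:ℝ) - t) (fun t => (1:ℝ) - k t) b
        (hcOn _) (hcOn _),
      cfc_sub (fun _ : ℝ => (2⁻¹:ℝ) • (1:ℝ)) (fun t : ℝ => t) b (hcOn _) (hcOn _),
      cfc_sub (fun _ : ℝ => (1:ℝ)) k b (hcOn _) (hcOn _), cfc_id' ℝ b,
      cfc_smul (2⁻¹:ℝ) (fun _ : ℝ => (1:ℝ)) b (hcOn _), cfc_const 1 b, map_one]
  obtain ⟨u, hu_sa, hI1⟩ := hkey1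
  obtain ⟨v, hv_sa, hI2⟩ := hkey2
  have hsmC : ∀ z : D, (2⁻¹:ℝ) • z = (2⁻¹:ℂ) • z := fun z => by
    rw [← algebraMap_smul ℂ (2⁻¹:ℝ) z]
    norm_num
  rw [hsmC] at hI1 hI2
  -- push to C(Y, ℂ)
  set P : C(Y, ℂ) := β q with hP
  set Bf : C(Y, ℂ) := β b with hBf
  have hP_proj : IsProjection P := by
    constructor
    · rw [hP, ← map_star, hq_sa.star_eq]
    · rw [hP, ← map_mul, hq_idem]
  have hP01 : ∀ y, P y = 0 ∨ P y = 1 := mul_self_eq_self_apply hP_proj.2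
  have hβe : β e = δ⁻¹ • a := by
    rw [he, ← algebraMap_smul ℂ (δ⁻¹ : ℝ) d, map_smul, algebraMap_smul, hβd]
  have hnorm : ‖δ⁻¹ • a - Bf‖ ≤ 4⁻¹ := by
    rw [← hβe, hBf, ← map_sub]
    exact (NonUnitalStarAlgHom.norm_apply_le β (e - b)).trans hb_close
  have husa : ∀ y, ((β u) y).im = 0 := sa_apply (hu_sa.map β)
  have hvsa : ∀ y, ((β v) y).im = 0 := sa_apply (hv_sa.map β)
  have hmain : ∀ y, (P y = 1 → δ / 4 ≤ (a y).re) ∧ (P y = 0 → (a y).re ≤ 3 * δ / 4) := by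
    intro y
    have hclose : |δ⁻¹ * (a y).re - (Bf y).re| ≤ 4⁻¹ := by
      have h1 : ‖(δ⁻¹ • a - Bf) y‖ ≤ 4⁻¹ :=
        le_trans (ContinuousMap.norm_coe_le_norm _ y) hnorm
      have h2 : ((δ⁻¹ • a - Bf) y).re = δ⁻¹ * (a y).re - (Bf y).re := by
        simp [Complex.sub_re, Complex.smul_re]
      calc |δ⁻¹ * (a y).re - (Bf y).re| = |((δ⁻¹ • a - Bf) y).re| := by rw [h2]
      _ ≤ ‖(δ⁻¹ • a - Bf) y‖ := Complex.abs_re_le_norm _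
      _ ≤ 4⁻¹ := h1
    have hre_sq : ∀ w : D, IsSelfAdjoint w → ((β w y) * (β w y)).re = (β w y).re ^ 2 := by
      intro w hw
      have him := sa_apply (hw.map β) y
      rw [Complex.mul_re, him]; ring
    constructor
    · intro hPy
      have hEq : β u y * β u y = Bf y * P y - (2⁻¹:ℂ) * P y := by
        have := congrArg (fun w : D => (β w) y) hI1
        simpa only [map_mul, map_sub, map_smul, ContinuousMap.mul_apply,
          ContinuousMap.sub_apply, ContinuousMap.smul_apply, smul_eq_mul] using this
      rw [hPy, mul_one, mul_one] at hEq
      have h5 := congrArg Complex.re hEq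
      rw [hre_sq u hu_sa] at h5
      have h6 : (Bf y - (2⁻¹:ℂ)).re = (Bf y).re - 2⁻¹ := by simp [Complex.sub_re]
      rw [h6] at h5
      have hBge : 2⁻¹ ≤ (Bf y).re := by nlinarith [sq_nonneg ((β u y).re)]
      have habs := abs_le.mp hclose
      have h4 : 4⁻¹ ≤ δ⁻¹ * (a y).re := by linarith
      calc δ / 4 = δ * 4⁻¹ := by ring
      _ ≤ δ * (δ⁻¹ * (a y).re) := mul_le_mul_of_nonneg_left h4 (le_of_lt hδ)
      _ = (a y).re := by field_simp
    · intro hPy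
      have hEq : β v y * β v y = ((2⁻¹:ℂ) - Bf y) * (1 - P y) := by
        have := congrArg (fun w : D => (β w) y) hI2
        simpa only [map_mul, map_sub, map_smul, map_one, ContinuousMap.mul_apply,
          ContinuousMap.sub_apply, ContinuousMap.smul_apply, ContinuousMap.one_apply,
          smul_eq_mul, mul_one] using this
      rw [hPy, sub_zero, mul_one] at hEq
      have h5 := congrArg Complex.re hEq
      rw [hre_sq v hv_sa] at h5
      have h6 : ((2⁻¹:ℂ) - Bf y).re = 2⁻¹ - (Bf y).re := by simp [Complex.sub_re]
      rw [h6] at h5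
      have hBle : (Bf y).re ≤ 2⁻¹ := by nlinarith [sq_nonneg ((β v y).re)]
      have habs := abs_le.mp hclose
      have h4 : δ⁻¹ * (a y).re ≤ 3 / 4 := by linarith
      calc (a y).re = δ * (δ⁻¹ * (a y).re) := by field_simp
      _ ≤ δ * (3 / 4) := mul_le_mul_of_nonneg_left h4 (le_of_lt hδ)
      _ = 3 * δ / 4 := by ring
  refine ⟨P, mem_herSub_of_vanish hapos (fun y hy => ?_), hP_proj, ?_⟩
  · rcases hP01 y with h0 | h1
    · exact h0
    · exfalso
      have := (hmain y).1 h1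
      rw [hy] at this
      simp only [Complex.zero_re] at this
      linarith
  · rw [ContinuousMap.norm_lt_iff _ hε]
    intro y
    rcases hP01 y with h0 | h1
    · have hle : (a y).re ≤ 3 * δ / 4 := (hmain y).2 h0
      have hlt : (a y).re < δ := by linarith
      have := hδx y hlt
      simp only [ContinuousMap.sub_apply, ContinuousMap.mul_apply, h0, zero_mul, zero_sub,
        norm_neg]
      linarith
    · simp only [ContinuousMap.sub_apply, ContinuousMap.mul_apply, h1, one_mul, sub_self,
        norm_zero]
      exact hε


section Aux2
variable {Y : Type} [TopologicalSpace Y] [CompactSpace Y] [T2Space Y]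

/-- The set of projections in `C(Y, ℂ)`. -/
def projSet (Y : Type) [TopologicalSpace Y] [CompactSpace Y] : Set C(Y, ℂ) :=
  {p | IsProjection p}

lemma mem_projSet_iff {p : C(Y,ℂ)} : p ∈ projSet Y ↔ IsProjection p := Iff.rfl

lemma proj_one : (1 : C(Y,ℂ)) ∈ projSet Y := mem_projSet_iff.mpr ⟨star_one _, one_mul 1⟩

lemma proj_mul {p q : C(Y,ℂ)} (hp : p ∈ projSet Y) (hq : q ∈ projSet Y) :
    p * q ∈ projSet Y := by
  obtain ⟨hp1, hp2⟩ := mem_projSet_iff.mp hp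
  obtain ⟨hq1, hq2⟩ := mem_projSet_iff.mp hq
  refine mem_projSet_iff.mpr ⟨?_, ?_⟩
  · rw [star_mul, hp1, hq1]; exact mul_comm q p
  · rw [mul_mul_mul_comm, hp2, hq2]

lemma star_mem_span {w : C(Y,ℂ)} (hw : w ∈ Submodule.span ℂ (projSet Y)) :
    star w ∈ Submodule.span ℂ (projSet Y) := by
  induction hw using Submodule.span_induction with
  | mem p hp => rw [(mem_projSet_iff.mp hp).1]; exact Submodule.subset_span hp
  | zero => rw [star_zero]; exact Submodule.zero_mem _
  | add x y hx hy ihx ihy => rw [star_add]; exact Submodule.add_mem _ ihx ihy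
  | smul c x hx ih => rw [star_smul]; exact Submodule.smul_mem _ _ ih

lemma mul_mem_span {x y : C(Y,ℂ)} (hx : x ∈ Submodule.span ℂ (projSet Y))
    (hy : y ∈ Submodule.span ℂ (projSet Y)) : x * y ∈ Submodule.span ℂ (projSet Y) := by
  induction hx using Submodule.span_induction with
  | mem p hp =>
    induction hy using Submodule.span_induction with
    | mem r hr => exact Submodule.subset_span (proj_mul hp hr)
    | zero => rw [mul_zero]; exact Submodule.zero_mem _
    | add u v hu hv ihu ihv => rw [mul_add]; exact Submodule.add_mem _ ihu ihv
    | smul c u hu ih => rw [mul_smul_comm]; exact Submodule.smul_mem _ _ ih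
  | zero => rw [zero_mul]; exact Submodule.zero_mem _
  | add u v hu hv ihu ihv => rw [add_mul]; exact Submodule.add_mem _ ihu ihv
  | smul c u hu ih => rw [smul_mul_assoc]; exact Submodule.smul_mem _ _ ih

lemma adjoin_le_span {v : C(Y,ℂ)} (hv : v ∈ StarAlgebra.adjoin ℂ (projSet Y)) :
    v ∈ Submodule.span ℂ (projSet Y) := by
  induction hv using StarAlgebra.adjoin_induction with
  | mem x hx => exact Submodule.subset_span hx
  | algebraMap r =>
    rw [Algebra.algebraMap_eq_smul_one]
    exact Submodule.smul_mem _ _ (Submodule.subset_span proj_one)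
  | add x y hx hy ihx ihy => exact Submodule.add_mem _ ihx ihy
  | mul x y hx hy ihx ihy => exact mul_mem_span ihx ihy
  | star x hx ih => exact star_mem_span ih

lemma span_le_adjoin {v : C(Y,ℂ)} (hv : v ∈ Submodule.span ℂ (projSet Y)) :
    v ∈ StarAlgebra.adjoin ℂ (projSet Y) := by
  induction hv using Submodule.span_induction with
  | mem p hp => exact StarAlgebra.subset_adjoin ℂ _ hp
  | zero => exact zero_mem _
  | add x y hx hy ihx ihy => exact add_mem ihx ihy
  | smul c x hx ih => exact SMulMemClass.smul_mem c ih

lemma range_finite_of_mem_span {w : C(Y,ℂ)} (hw : w ∈ Submodule.span ℂ (projSet Y)) :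
    (Set.range ⇑w).Finite := by
  induction hw using Submodule.span_induction with
  | mem p hp =>
    apply (Set.finite_singleton (0:ℂ) |>.insert 1).subset
    rintro _ ⟨y, rfl⟩
    rcases mul_self_eq_self_apply (mem_projSet_iff.mp hp).2 y with h | h <;> simp [h]
  | zero =>
    apply (Set.finite_singleton (0:ℂ)).subset
    rintro _ ⟨y, rfl⟩; simp
  | add u v hu hv ihu ihv =>
    apply (Set.Finite.image2 (· + ·) ihu ihv).subset
    rintro _ ⟨y, rfl⟩
    exact Set.mem_image2_of_mem (Set.mem_range_self y) (Set.mem_range_self y)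
  | smul c u hu ih =>
    apply (ih.image (c • ·)).subset
    rintro _ ⟨y, rfl⟩
    exact ⟨u y, Set.mem_range_self y, rfl⟩


end Aux2

section Forward
variable {X Y : Type} [TopologicalSpace X] [CompactSpace X] [T2Space X]
  [TopologicalSpace Y] [CompactSpace Y] [T2Space Y] (φ : C(Y, X))

lemma exists_proj
    (H : InclusionRealRankZero (Set.range fun f : C(X, ℂ) => f.comp φ)
      (Set.univ : Set C(Y, ℂ)))
    {g : C(Y,ℂ)} (hgA : g ∈ Set.range fun f : C(X, ℂ) => f.comp φ)
    (hg : (0:C(Y,ℂ)) ≤ g) {s t : ℝ} (hs : 0 < s) (hst : s < t) :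
    ∃ p : C(Y,ℂ), IsProjection p ∧ (∀ y, t ≤ (g y).re → p y = 1) ∧
      (∀ y, (g y).re ≤ s → p y = 0) := by
  have hcps : Continuous fun z : ℂ => ((max (z.re - s) 0 : ℝ) : ℂ) := by
    apply Complex.continuous_ofReal.comp
    exact (Complex.continuous_re.sub continuous_const).max continuous_const
  set cps : C(ℂ, ℂ) := ⟨fun z => ((max (z.re - s) 0 : ℝ) : ℂ), hcps⟩ with hcpsdef
  set gs : C(Y, ℂ) := cps.comp g with hgs
  have hgs_apply : ∀ y, gs y = ((max ((g y).re - s) 0 : ℝ) : ℂ) := fun y => rfl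
  have hgsA : gs ∈ Set.range fun f : C(X, ℂ) => f.comp φ := by
    obtain ⟨f, hf⟩ := hgA
    refine ⟨cps.comp f, ?_⟩
    show (cps.comp f).comp φ = gs
    rw [hgs, ContinuousMap.comp_assoc]
    exact congrArg (fun w => cps.comp w) hf
  have hgs_pos : (0:C(Y,ℂ)) ≤ gs := by
    rw [ContinuousMap.le_def]
    intro y
    rw [ContinuousMap.zero_apply, hgs_apply y]
    rw [Complex.le_def]
    constructor
    · simp [le_max_right]
    · simp
  by_cases hgs0 : gs = 0
  · refine ⟨0, ⟨star_zero _, mul_zero 0⟩, fun y hy => ?_, fun y _ => rfl⟩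
    exfalso
    have h0 : gs y = 0 := by rw [hgs0]; rfl
    rw [hgs_apply y] at h0
    have : max ((g y).re - s) 0 = 0 := by exact_mod_cast h0
    have h2 : t - s ≤ max ((g y).re - s) 0 := le_max_of_le_left (by linarith)
    linarith
  · obtain ⟨p, hpmem, hpproj, hnorm⟩ :=
      H gs hgsA hgs_pos hgs0 gs (mem_herSub_of_vanish hgs_pos (fun _ h => h)) hgs_pos
        ((t - s)/2) (by linarith)
    refine ⟨p, hpproj, fun y hy => ?_, fun y hy => ?_⟩
    · have hval : gs y = (((g y).re - s : ℝ) : ℂ) := by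
        rw [hgs_apply y, max_eq_left (by linarith)]
      rcases mul_self_eq_self_apply hpproj.2 y with h0 | h1
      · exfalso
        have hb : ‖(p * gs - gs) y‖ ≤ ‖p * gs - gs‖ := ContinuousMap.norm_coe_le_norm _ y
        have hv : (p * gs - gs) y = -(gs y) := by
          simp [ContinuousMap.sub_apply, ContinuousMap.mul_apply, h0]
        rw [hv, norm_neg, hval] at hb
        have : ‖(((g y).re - s : ℝ) : ℂ)‖ = (g y).re - s := by
          rw [Complex.norm_real, Real.norm_of_nonneg (by linarith)]
        rw [this] at hb
        have := lt_of_le_of_lt hb hnorm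
        linarith
      · exact h1
    · exact vanish_of_mem_herSub hpmem (by
        rw [hgs_apply y, max_eq_right (by linarith)]; simp)

lemma approx_pos
    (H : InclusionRealRankZero (Set.range fun f : C(X, ℂ) => f.comp φ)
      (Set.univ : Set C(Y, ℂ)))
    {a : C(Y,ℂ)} (haA : a ∈ Set.range fun f : C(X, ℂ) => f.comp φ)
    (hapos : (0:C(Y,ℂ)) ≤ a) :
    a ∈ closure ((Submodule.span ℂ (projSet Y) : Submodule ℂ C(Y,ℂ)) : Set C(Y,ℂ)) := by
  rw [Metric.mem_closure_iff]
  intro ε' hε'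
  set ε : ℝ := ε' / 4 with hεdef
  have hε : 0 < ε := by positivity
  set K : ℕ := ⌈‖a‖ / ε⌉₊ with hK
  have hchoice : ∀ k : ℕ, ∃ p : C(Y,ℂ), IsProjection p ∧
      (∀ y, ((k:ℝ)+2)*ε ≤ (a y).re → p y = 1) ∧
      (∀ y, (a y).re ≤ ((k:ℝ)+1)*ε → p y = 0) := by
    intro k
    exact exists_proj φ H haA hapos (by positivity)
      (by have : (0:ℝ) < ε := hε; nlinarith)
  choose p hproj h1 h0 using hchoice
  set b : C(Y,ℂ) := ε • (∑ k ∈ Finset.range K, p k) with hb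
  have hbmem : b ∈ Submodule.span ℂ (projSet Y) := by
    have hsum : (∑ k ∈ Finset.range K, p k) ∈ Submodule.span ℂ (projSet Y) :=
      Submodule.sum_mem _ (fun k _ => Submodule.subset_span (hproj k))
    have : b = ((ε : ℂ)) • (∑ k ∈ Finset.range K, p k) := by
      rw [hb, ← algebraMap_smul ℂ ε (∑ k ∈ Finset.range K, p k)]
      norm_num
    rw [this]
    exact Submodule.smul_mem _ _ hsum
  refine ⟨b, hbmem, ?_⟩
  rw [dist_eq_norm]
  have key : ∀ y, ‖(a - b) y‖ ≤ 3 * ε := by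
    intro y
    obtain ⟨hay, hm0⟩ := pos_apply hapos y
    set m : ℝ := (a y).re with hm
    have hmM : m ≤ ‖a‖ := by
      calc m ≤ |m| := le_abs_self m
      _ ≤ ‖a y‖ := Complex.abs_re_le_norm _
      _ ≤ ‖a‖ := ContinuousMap.norm_coe_le_norm a y
    set c : ℕ → ℝ := fun k => (p k y).re with hc
    have hcval : ∀ k, p k y = ((c k : ℝ) : ℂ) ∧ (c k = 0 ∨ c k = 1) := by
      intro k
      rcases mul_self_eq_self_apply (hproj k).2 y with h | h <;>
        simp [hc, h]
    have hc1 : ∀ k : ℕ, ((k:ℝ)+2)*ε ≤ m → c k = 1 := fun k h => by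
      show ((p k) y).re = 1
      rw [h1 k y h]; simp
    have hc0 : ∀ k : ℕ, m ≤ ((k:ℝ)+1)*ε → c k = 0 := fun k h => by
      show ((p k) y).re = 0
      rw [h0 k y h]; simp
    set S : ℝ := ∑ k ∈ Finset.range K, c k with hS
    have hSnn : 0 ≤ S := Finset.sum_nonneg fun k _ => by
      rcases (hcval k).2 with h | h <;> simp [h]
    set n₀ : ℕ := ⌊m / ε⌋₊ with hn₀
    have hn₀le : (n₀ : ℝ) ≤ m / ε := Nat.floor_le (by positivity)
    have hn₀gt : m / ε < (n₀ : ℝ) + 1 := Nat.lt_floor_add_one _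
    -- upper bound : S ≤ n₀
    have hupper : S ≤ (n₀ : ℝ) := by
      have hle : S ≤ ∑ k ∈ Finset.range K, (if ((k:ℝ)+1)*ε < m then (1:ℝ) else 0) := by
        apply Finset.sum_le_sum
        intro k _
        by_cases hk : ((k:ℝ)+1)*ε < m
        · rcases (hcval k).2 with h | h <;> simp [h, hk]
        · rw [hc0 k (not_lt.mp hk)]; simp [hk]
      have hcard : ∑ k ∈ Finset.range K, (if ((k:ℝ)+1)*ε < m then (1:ℝ) else 0)
          = ((Finset.range K).filter (fun k : ℕ => ((k:ℝ)+1)*ε < m)).card := by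
        simpa using Finset.sum_boole (s := Finset.range K)
          (p := fun k : ℕ => ((k:ℝ)+1)*ε < m)
      have hsub : (Finset.range K).filter (fun k : ℕ => ((k:ℝ)+1)*ε < m) ⊆ Finset.range n₀ := by
        intro k hk
        simp only [Finset.mem_filter, Finset.mem_range] at hk ⊢
        have hk2 : ((k:ℝ)+1) < m / ε := by
          rw [lt_div_iff₀ hε]; exact hk.2
        have : ((k+1 : ℕ) : ℝ) ≤ m / ε := by push_cast; linarith
        have := Nat.le_floor this
        omega
      calc S ≤ _ := hle
      _ = _ := hcard
      _ ≤ (Finset.range n₀).card := by exact_mod_cast Nat.cast_le.mpr (Finset.card_le_card hsub)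
      _ = (n₀ : ℝ) := by rw [Finset.card_range]
    -- lower bound : (n₀ : ℝ) - 2 ≤ S
    have hlower : (n₀ : ℝ) - 2 ≤ S := by
      rcases le_or_gt n₀ 2 with h2 | h2
      · have : (n₀ : ℝ) ≤ 2 := by exact_mod_cast h2
        linarith
      · have hn₀K : n₀ ≤ K := by
          have h3 : (n₀ : ℝ) ≤ ‖a‖ / ε := le_trans hn₀le (by gcongr)
          have h4 : (n₀ : ℝ) ≤ (K : ℝ) := le_trans h3 (Nat.le_ceil _)
          exact_mod_cast h4
        have hsub : Finset.range (n₀ - 2) ⊆ Finset.range K := by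
          apply Finset.range_subset_range.mpr; omega
        have hone : ∀ k ∈ Finset.range (n₀ - 2), c k = 1 := by
          intro k hk
          rw [Finset.mem_range] at hk
          apply hc1
          have hk2 : k + 2 ≤ n₀ := by omega
          have : ((k:ℝ) + 2) ≤ (n₀ : ℝ) := by exact_mod_cast hk2
          calc ((k:ℝ)+2)*ε ≤ (n₀:ℝ) * ε := by nlinarith
          _ ≤ (m / ε) * ε := by nlinarith
          _ = m := by field_simp
        have : ((n₀ - 2 : ℕ) : ℝ) ≤ S := by
          calc ((n₀ - 2 : ℕ) : ℝ) = ∑ k ∈ Finset.range (n₀ - 2), c k := by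
                rw [Finset.sum_congr rfl hone]
                simp
          _ ≤ S := Finset.sum_le_sum_of_subset_of_nonneg hsub (fun k _ _ => by
                rcases (hcval k).2 with h | h <;> simp [h])
        have hcast : (n₀ : ℝ) - 2 ≤ ((n₀ - 2 : ℕ) : ℝ) := by
          rw [Nat.cast_sub (by omega)]; norm_num
        linarith
    -- combine
    have hεS : ε * S ≤ m := by
      calc ε * S ≤ ε * (n₀:ℝ) := by nlinarith
      _ ≤ ε * (m / ε) := by nlinarith
      _ = m := by field_simp
    have hεS2 : m - 3*ε ≤ ε * S := by
      have : m / ε - 3 ≤ (n₀:ℝ) - 2 := by linarith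
      have h5 : ε * ((n₀:ℝ) - 2) ≤ ε * S := by nlinarith
      have h6 : ε * (m / ε - 3) ≤ ε * ((n₀:ℝ) - 2) := by nlinarith
      have h7 : ε * (m / ε - 3) = m - 3*ε := by field_simp
      linarith
    -- pointwise value
    have hval : (a - b) y = ((m - ε * S : ℝ) : ℂ) := by
      simp only [ContinuousMap.sub_apply, hb, ContinuousMap.smul_apply,
        ContinuousMap.sum_apply]
      rw [hay]
      have : ∑ k ∈ Finset.range K, p k y = ((S : ℝ) : ℂ) := by
        rw [hS]
        push_cast
        apply Finset.sum_congr rfl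
        intro k _
        exact (hcval k).1
      rw [this]
      rw [Complex.real_smul]
      push_cast
      ring
    rw [hval, Complex.norm_real, Real.norm_eq_abs, abs_le]
    constructor <;> linarith
  calc ‖a - b‖ ≤ 3 * ε := (ContinuousMap.norm_le _ (by positivity)).mpr key
  _ < ε' := by rw [hεdef]; linarith


end Forward

section Forward2
variable {X Y : Type} [TopologicalSpace X] [CompactSpace X] [T2Space X]
  [TopologicalSpace Y] [CompactSpace Y] [T2Space Y] (φ : C(Y, X))

/-- The closed star subalgebra generated by the projections. -/
noncomputable def Ealg (Y : Type) [TopologicalSpace Y] [CompactSpace Y] [T2Space Y] :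
    StarSubalgebra ℂ C(Y,ℂ) :=
  (StarAlgebra.adjoin ℂ (projSet Y)).topologicalClosure

lemma closure_span_sub_E :
    closure ((Submodule.span ℂ (projSet Y) : Submodule ℂ C(Y,ℂ)) : Set C(Y,ℂ))
      ⊆ (Ealg Y : Set C(Y,ℂ)) := by
  rw [Ealg, StarSubalgebra.topologicalClosure_coe]
  exact closure_mono (fun u hu => span_le_adjoin hu)

lemma hA_one : (1:C(Y,ℂ)) ∈ Set.range fun f : C(X, ℂ) => f.comp φ :=
  ⟨1, ContinuousMap.one_comp φ⟩

lemma hA_add {u v : C(Y,ℂ)} (hu : u ∈ Set.range fun f : C(X, ℂ) => f.comp φ)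
    (hv : v ∈ Set.range fun f : C(X, ℂ) => f.comp φ) :
    u + v ∈ Set.range fun f : C(X, ℂ) => f.comp φ := by
  obtain ⟨f, rfl⟩ := hu; obtain ⟨g, rfl⟩ := hv
  exact ⟨f + g, ContinuousMap.add_comp f g φ⟩

lemma hA_smul (c : ℂ) {u : C(Y,ℂ)} (hu : u ∈ Set.range fun f : C(X, ℂ) => f.comp φ) :
    c • u ∈ Set.range fun f : C(X, ℂ) => f.comp φ := by
  obtain ⟨f, rfl⟩ := hu
  exact ⟨c • f, ContinuousMap.smul_comp c f φ⟩

lemma hA_star {u : C(Y,ℂ)} (hu : u ∈ Set.range fun f : C(X, ℂ) => f.comp φ) :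
    star u ∈ Set.range fun f : C(X, ℂ) => f.comp φ := by
  obtain ⟨f, rfl⟩ := hu
  refine ⟨star f, ?_⟩
  ext y
  simp [ContinuousMap.star_apply]

lemma sa_mem_E
    (H : InclusionRealRankZero (Set.range fun f : C(X, ℂ) => f.comp φ)
      (Set.univ : Set C(Y, ℂ)))
    {w : C(Y,ℂ)} (hwA : w ∈ Set.range fun f : C(X, ℂ) => f.comp φ)
    (hw : star w = w) : w ∈ Ealg Y := by
  have him : ∀ y, (w y).im = 0 := sa_apply hw
  have hpos : (0:C(Y,ℂ)) ≤ w + (‖w‖:ℂ) • 1 := by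
    rw [ContinuousMap.le_def]
    intro y
    simp only [ContinuousMap.zero_apply, ContinuousMap.add_apply, ContinuousMap.smul_apply,
      ContinuousMap.one_apply, smul_eq_mul, mul_one]
    rw [Complex.le_def]
    constructor
    · simp only [Complex.zero_re, Complex.add_re, Complex.ofReal_re]
      have h1 : |(w y).re| ≤ ‖w y‖ := Complex.abs_re_le_norm _
      have h2 : ‖w y‖ ≤ ‖w‖ := ContinuousMap.norm_coe_le_norm w y
      have := abs_le.mp (h1.trans h2)
      linarith [this.1]
    · simp [him y]
  have hmem : w + (‖w‖:ℂ) • 1 ∈ Set.range fun f : C(X, ℂ) => f.comp φ :=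
    hA_add φ hwA (hA_smul φ _ (hA_one φ))
  have h1 := approx_pos φ H hmem hpos
  have h2 : w + (‖w‖:ℂ) • 1 ∈ Ealg Y := closure_span_sub_E h1
  have h3 : (‖w‖:ℂ) • (1:C(Y,ℂ)) ∈ Ealg Y :=
    SMulMemClass.smul_mem _ (one_mem _)
  have := sub_mem h2 h3
  simpa using this

lemma hA_sub {u v : C(Y,ℂ)} (hu : u ∈ Set.range fun f : C(X, ℂ) => f.comp φ)
    (hv : v ∈ Set.range fun f : C(X, ℂ) => f.comp φ) :
    u - v ∈ Set.range fun f : C(X, ℂ) => f.comp φ := by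
  obtain ⟨f, rfl⟩ := hu; obtain ⟨g, rfl⟩ := hv
  exact ⟨f - g, ContinuousMap.sub_comp f g φ⟩

lemma mem_E_of_A
    (H : InclusionRealRankZero (Set.range fun f : C(X, ℂ) => f.comp φ)
      (Set.univ : Set C(Y, ℂ)))
    {a : C(Y,ℂ)} (haA : a ∈ Set.range fun f : C(X, ℂ) => f.comp φ) : a ∈ Ealg Y := by
  set ar : C(Y,ℂ) := (2⁻¹:ℂ) • (a + star a) with har
  set ai : C(Y,ℂ) := ((2⁻¹:ℂ) * Complex.I) • (star a - a) with hai
  have harA : ar ∈ Set.range fun f : C(X, ℂ) => f.comp φ :=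
    hA_smul φ _ (hA_add φ haA (hA_star φ haA))
  have haiA : ai ∈ Set.range fun f : C(X, ℂ) => f.comp φ :=
    hA_smul φ _ (hA_sub φ (hA_star φ haA) haA)
  have hstar_half : star (2⁻¹:ℂ) = (2⁻¹:ℂ) := by
    simp [Complex.ext_iff]
  have har_sa : star ar = ar := by
    rw [har, star_smul, star_add, star_star, hstar_half, add_comm]
  have hai_sa : star ai = ai := by
    rw [hai, star_smul, star_sub, star_star]
    rw [show star ((2⁻¹:ℂ) * Complex.I) = -((2⁻¹:ℂ) * Complex.I) by
      simp [Complex.ext_iff]]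
    module
  have hdecomp : a = ar + Complex.I • ai := by
    rw [har, hai, smul_smul]
    rw [show Complex.I * ((2⁻¹:ℂ) * Complex.I) = (-2⁻¹ : ℂ) by
      rw [mul_comm, mul_assoc, Complex.I_mul_I]; ring]
    module
  rw [hdecomp]
  exact add_mem (sa_mem_E φ H harA har_sa)
    (SMulMemClass.smul_mem _ (sa_mem_E φ H haiA hai_sa))


end Forward2

section Forward3
variable {X Y : Type} [TopologicalSpace X] [CompactSpace X] [T2Space X]
  [TopologicalSpace Y] [CompactSpace Y] [T2Space Y] (φ : C(Y, X))

noncomputable instance : CommCStarAlgebra (Ealg Y) := by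
  haveI : IsClosed ((Ealg Y : Set C(Y,ℂ))) :=
    (StarAlgebra.adjoin ℂ (projSet Y)).isClosed_topologicalClosure
  infer_instance

example (z : Ealg Y) : ‖z‖ = ‖(z : C(Y,ℂ))‖ := rfl

lemma E_rr0 : ∀ a : Ealg Y, IsSelfAdjoint a → ∀ ε : ℝ, 0 < ε →
    ∃ b : Ealg Y, IsSelfAdjoint b ∧ (spectrum ℂ b).Finite ∧ ‖a - b‖ ≤ ε := by
  haveI hEc : IsClosed ((Ealg Y : Set C(Y,ℂ))) :=
    (StarAlgebra.adjoin ℂ (projSet Y)).isClosed_topologicalClosure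
  intro aE hsa ε hε
  set v : C(Y,ℂ) := (aE : C(Y,ℂ)) with hv
  have hv_star : star v = v := by
    have := congrArg Subtype.val hsa.star_eq
    simpa using this
  have hvE : v ∈ closure ((Submodule.span ℂ (projSet Y) :
      Submodule ℂ C(Y,ℂ)) : Set C(Y,ℂ)) := by
    have h2 : v ∈ (Ealg Y : Set C(Y,ℂ)) := aE.2
    rw [Ealg, StarSubalgebra.topologicalClosure_coe] at h2
    refine (closure_mono (fun u hu => ?_)) h2
    exact adjoin_le_span hu
  obtain ⟨w, hwmem, hwd⟩ := Metric.mem_closure_iff.mp hvE ε hε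
  rw [dist_eq_norm] at hwd
  set w' : C(Y,ℂ) := (2⁻¹:ℂ) • (w + star w) with hw'
  have hw'mem : w' ∈ Submodule.span ℂ (projSet Y) :=
    Submodule.smul_mem _ _ (Submodule.add_mem _ hwmem (star_mem_span hwmem))
  have hw'E : w' ∈ Ealg Y :=
    (StarAlgebra.adjoin ℂ (projSet Y)).le_topologicalClosure (span_le_adjoin hw'mem)
  have hw'_star : star w' = w' := by
    rw [hw', star_smul, star_add, star_star]
    rw [show star (2⁻¹:ℂ) = (2⁻¹:ℂ) by simp [Complex.ext_iff]]
    rw [add_comm]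
  refine ⟨⟨w', hw'E⟩, ?_, ?_, ?_⟩
  · exact Subtype.ext hw'_star
  · have h1 : spectrum ℂ (⟨w', hw'E⟩ : Ealg Y) = spectrum ℂ w' :=
      StarSubalgebra.spectrum_eq (Ealg Y) (a := ⟨w', hw'E⟩)
    rw [h1, ContinuousMap.spectrum_eq_range]
    exact range_finite_of_mem_span hw'mem
  · have hnc : ‖aE - (⟨w', hw'E⟩ : Ealg Y)‖ = ‖v - w'‖ := rfl
    rw [hnc]
    have hvw : v - w' = (2⁻¹:ℂ) • ((v - w) + star (v - w)) := by
      rw [star_sub, hv_star]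
      module
    rw [hvw]
    calc ‖(2⁻¹:ℂ) • ((v - w) + star (v - w))‖
        = 2⁻¹ * ‖(v - w) + star (v - w)‖ := by
          rw [norm_smul]
          norm_num
    _ ≤ 2⁻¹ * (‖v - w‖ + ‖star (v - w)‖) := by
          apply mul_le_mul_of_nonneg_left (norm_add_le _ _) (by norm_num)
    _ = ‖v - w‖ := by rw [norm_star]; ring
    _ ≤ ε := le_of_lt hwd


end Forward3

theorem stmt13 {X Y : Type} [TopologicalSpace X] [CompactSpace X] [T2Space X]
    [TopologicalSpace Y] [CompactSpace Y] [T2Space Y] (φ : C(Y, X)) :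
    InclusionRealRankZero (Set.range fun f : C(X, ℂ) => f.comp φ)
        (Set.univ : Set C(Y, ℂ)) ↔
      ∃ (D : Type) (instD : CommCStarAlgebra D),
        UnitalRealRankZero D instD ∧ FactorsThroughAlg φ D instD := by
  constructor
  · intro H
    refine ⟨Ealg Y, inferInstance, E_rr0, ?_⟩
    exact ⟨(ContinuousMap.compStarAlgHom' ℂ ℂ φ).codRestrict (Ealg Y)
      (fun f => mem_E_of_A φ H ⟨f, rfl⟩), (Ealg Y).subtype, fun f => rfl⟩
  · rintro ⟨D, instD, hRR, hfac⟩
    exact backward φ D instD hRR hfac
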